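/- The number of minimal elements of the poset P of join-irreducible elements of Γ(X;γ) equals u = #{i ∈ {1,...,m} : b_i + 1 < b_{i+1} and b_i < n} (with b_{m+1} := n + 1). In particular, P has a unique minimal element iff u = 1. -/
import Mathlib


def IsTup (n m : ℕ) (c : Fin m → ℕ) : Prop :=
  StrictMono c ∧ ∀ i, 1 ≤ c i ∧ c i ≤ n

def Gamma (n m : ℕ) : Set (Fin m → ℕ) := {c | IsTup n m c}

def GammaF (n m : ℕ) (b : Fin m → ℕ) : Set (Fin m → ℕ) :=
  {c | IsTup n m c ∧ b ≤ c}

/-- `prev c i` is `c (i-1)`, with the convention `c 0 = 0` (1-based indexing). -/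
def prev {m : ℕ} (c : Fin m → ℕ) (i : Fin m) : ℕ :=
  if _ : i.1 = 0 then 0 else c ⟨i.1 - 1, Nat.lt_of_le_of_lt (Nat.sub_le _ _) i.2⟩

/-- the condition `c i > b i` and `c i > c (i-1) + 1`. -/
def Good {m : ℕ} (b c : Fin m → ℕ) (i : Fin m) : Prop :=
  b i < c i ∧ prev c i + 1 < c i

/-- `c` is join-irreducible in `Γ(X;γ)`: it covers exactly one element. -/
def JoinIrr (n m : ℕ) (b : Fin m → ℕ) (c : ↥(GammaF n m b)) : Prop :=
  ∃! y : ↥(GammaF n m b), y ⋖ c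

/-- the poset of join-irreducible elements of `Γ(X;γ)`. -/
def JP (n m : ℕ) (b : Fin m → ℕ) : Set ↥(GammaF n m b) := {c | JoinIrr n m b c}

/-- the map φ, computed at index `i` (0-based; 1-based index is `i+1`). -/
def phi (n m : ℕ) (c : Fin m → ℕ) (i : Fin m) : ℕ × ℕ :=
  (n - c i - (m - 1 - i.1), i.1)

def GapIdx (n m : ℕ) (b : Fin m → ℕ) (l : Fin m) : Prop :=
  b l < n ∧ ∀ j : Fin m, j.1 = l.1 + 1 → b l + 1 < b j

def Atm {m : ℕ} (b : Fin m → ℕ) (l : Fin m) : Fin m → ℕ :=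
  fun j => if j = l then b l + 1 else b j

lemma Atm_self {m : ℕ} (b : Fin m → ℕ) (l : Fin m) : Atm b l l = b l + 1 := by
  simp [Atm]

lemma Atm_of_ne {m : ℕ} (b : Fin m → ℕ) {l j : Fin m} (h : j ≠ l) : Atm b l j = b j := by
  simp [Atm, h]

lemma bsub_mem {n m : ℕ} {b : Fin m → ℕ} (hb : b ∈ Gamma n m) : b ∈ GammaF n m b :=
  ⟨hb, le_refl b⟩

lemma atom_mem {n m : ℕ} {b : Fin m → ℕ} (hb : b ∈ Gamma n m) {l : Fin m}
    (hl : GapIdx n m b l) : Atm b l ∈ GammaF n m b := by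
  obtain ⟨hsm, hbd⟩ := hb
  refine ⟨⟨?_, ?_⟩, ?_⟩
  · intro i j hij
    by_cases hi : i = l
    · subst hi
      rw [Atm_self, Atm_of_ne b (ne_of_gt hij)]
      have hjm : i.1 + 1 < m := lt_of_le_of_lt (by exact hij) j.2
      have h1 : b i + 1 < b ⟨i.1 + 1, hjm⟩ := hl.2 _ rfl
      have h2 : b ⟨i.1 + 1, hjm⟩ ≤ b j := hsm.monotone (by
        show (⟨i.1 + 1, hjm⟩ : Fin m) ≤ j
        exact hij)
      omega
    · by_cases hj : j = l
      · subst hj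
        rw [Atm_of_ne b hi, Atm_self]
        have := hsm hij
        omega
      · rw [Atm_of_ne b hi, Atm_of_ne b hj]; exact hsm hij
  · intro i
    by_cases hi : i = l
    · subst hi; rw [Atm_self]; exact ⟨by omega, by have := hl.1; omega⟩
    · rw [Atm_of_ne b hi]; exact hbd i
  · intro j
    by_cases hj : j = l
    · subst hj; rw [Atm_self]; exact Nat.le_succ _
    · rw [Atm_of_ne b hj]

lemma sandwich {m : ℕ} {b : Fin m → ℕ} {l : Fin m} {z : Fin m → ℕ}
    (h1 : b ≤ z) (h2 : z ≤ Atm b l) : z = b ∨ z = Atm b l := by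
  by_cases hz : z l = b l
  · left
    funext j
    by_cases hj : j = l
    · subst hj; exact hz
    · have h2' := h2 j
      rw [Atm_of_ne b hj] at h2'
      exact le_antisymm h2' (h1 j)
  · right
    funext j
    by_cases hj : j = l
    · subst hj
      rw [Atm_self]
      have h2' := h2 j
      rw [Atm_self] at h2'
      have hA : z j ≤ b j + 1 := h2'
      have hB : b j ≤ z j := h1 j
      omega
    · rw [Atm_of_ne b hj]
      have h2' := h2 j
      rw [Atm_of_ne b hj] at h2'
      exact le_antisymm h2' (h1 j)

lemma atm_ne {m : ℕ} {b : Fin m → ℕ} {l : Fin m} : b ≠ Atm b l := by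
  intro h
  have := congrFun h l
  rw [Atm_self] at this
  omega

lemma atom_joinIrr {n m : ℕ} {b : Fin m → ℕ} (hb : b ∈ Gamma n m) {l : Fin m}
    (hl : GapIdx n m b l) :
    ∃! y : ↥(GammaF n m b), y ⋖ (⟨Atm b l, atom_mem hb hl⟩ : ↥(GammaF n m b)) := by
  have hble : b ≤ Atm b l := (atom_mem hb hl).2
  refine ⟨⟨b, bsub_mem hb⟩, ?_, ?_⟩
  · constructor
    · exact lt_of_le_of_ne (by exact hble) (by
        intro h
        exact atm_ne (congrArg Subtype.val h))
    · intro z hz1 hz2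
      have hbz : b ≤ z.1 := z.2.2
      have hza : z.1 ≤ Atm b l := hz2.le
      rcases sandwich hbz hza with h | h
      · exact absurd (Subtype.ext h.symm) hz1.ne
      · exact absurd (Subtype.ext h) hz2.ne
  · intro y hy
    have hbz : b ≤ y.1 := y.2.2
    have hza : y.1 ≤ Atm b l := hy.lt.le
    rcases sandwich hbz hza with h | h
    · exact Subtype.ext h
    · exact absurd (Subtype.ext h) hy.lt.ne

lemma JP_ne_bot {n m : ℕ} {b : Fin m → ℕ} {c : ↥(GammaF n m b)}
    (hc : c ∈ JP n m b) : c.1 ≠ b := by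
  obtain ⟨y, hy, -⟩ := hc
  intro h
  have h1 : y.1 ≤ c.1 := hy.lt.le
  rw [h] at h1
  have h2 : b ≤ y.1 := y.2.2
  exact hy.lt.ne (Subtype.ext (by rw [h]; exact le_antisymm h1 h2))

lemma exists_atom_le {n m : ℕ} {b : Fin m → ℕ} (c : ↥(GammaF n m b))
    (hc : c.1 ≠ b) : ∃ l, GapIdx n m b l ∧ Atm b l ≤ c.1 := by
  obtain ⟨⟨hsm, hbd⟩, hbc⟩ := c.2
  have hne : (Finset.univ.filter (fun i => b i < c.1 i)).Nonempty := by
    rcases Function.ne_iff.1 (Ne.symm hc) with ⟨i, hi⟩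
    exact ⟨i, Finset.mem_filter.2 ⟨Finset.mem_univ _, lt_of_le_of_ne (hbc i) hi⟩⟩
  set l := (Finset.univ.filter (fun i => b i < c.1 i)).max' hne with hldef
  have hlmem : b l < c.1 l := by
    have := (Finset.univ.filter (fun i => b i < c.1 i)).max'_mem hne
    exact (Finset.mem_filter.1 this).2
  have hgt : ∀ j : Fin m, l < j → c.1 j = b j := by
    intro j hj
    by_contra h
    have hjm : j ∈ Finset.univ.filter (fun i => b i < c.1 i) :=
      Finset.mem_filter.2 ⟨Finset.mem_univ _, lt_of_le_of_ne (hbc j) (Ne.symm h)⟩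
    have := Finset.le_max' _ j hjm
    exact absurd (le_antisymm this hj.le) hj.ne'
  refine ⟨l, ⟨?_, ?_⟩, ?_⟩
  · exact lt_of_lt_of_le hlmem ((hbd l).2)
  · intro j hj
    have hlj : l < j := by
      have : l.1 < j.1 := by omega
      exact this
    have h1 : c.1 j = b j := hgt j hlj
    have h2 : c.1 l < c.1 j := hsm hlj
    omega
  · intro j
    by_cases hj : j = l
    · subst hj; rw [Atm_self]; exact hlmem
    · rw [Atm_of_ne b hj]; exact hbc j

lemma atom_minimal {n m : ℕ} {b : Fin m → ℕ} (hb : b ∈ Gamma n m) {l : Fin m}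
    (hl : GapIdx n m b l) :
    Minimal (· ∈ JP n m b) (⟨Atm b l, atom_mem hb hl⟩ : ↥(GammaF n m b)) := by
  refine ⟨atom_joinIrr hb hl, ?_⟩
  intro y hy hyle
  rcases sandwich y.2.2 (show y.1 ≤ Atm b l from hyle) with h | h
  · exact absurd h (JP_ne_bot hy)
  · exact le_of_eq (Subtype.ext h.symm)

lemma minimal_eq {n m : ℕ} {b : Fin m → ℕ} (hb : b ∈ Gamma n m)
    {c : ↥(GammaF n m b)} (hc : Minimal (· ∈ JP n m b) c) :
    ∃ l, GapIdx n m b l ∧ c.1 = Atm b l := by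
  obtain ⟨l, hl, hle⟩ := exists_atom_le c (JP_ne_bot hc.1)
  have hatom : (⟨Atm b l, atom_mem hb hl⟩ : ↥(GammaF n m b)) ∈ JP n m b :=
    atom_joinIrr hb hl
  have := hc.2 hatom (show (⟨Atm b l, atom_mem hb hl⟩ : ↥(GammaF n m b)) ≤ c from hle)
  exact ⟨l, hl, le_antisymm this hle⟩

theorem stmt14 (n m : ℕ) (hm : 1 ≤ m) (hmn : m ≤ n) (b : Fin m → ℕ)
    (hb : b ∈ Gamma n m) :
    {c : ↥(GammaF n m b) | Minimal (· ∈ JP n m b) c}.ncard =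
      {l : Fin m | GapIdx n m b l}.ncard ∧
    ((∃! c : ↥(GammaF n m b), Minimal (· ∈ JP n m b) c) ↔
      {l : Fin m | GapIdx n m b l}.ncard = 1) := by
  classical
  set f : Fin m → ↥(GammaF n m b) := fun l =>
    if h : GapIdx n m b l then ⟨Atm b l, atom_mem hb h⟩ else ⟨b, bsub_mem hb⟩ with hf
  have himg : {c : ↥(GammaF n m b) | Minimal (· ∈ JP n m b) c} =
      f '' {l : Fin m | GapIdx n m b l} := by
    ext c
    simp only [Set.mem_image, Set.mem_setOf_eq]
    constructor
    · intro h
      obtain ⟨l, hl, hcl⟩ := minimal_eq hb h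
      exact ⟨l, hl, by simp only [hf, dif_pos hl]; exact Subtype.ext hcl.symm⟩
    · rintro ⟨l, hl, rfl⟩
      simp only [hf, dif_pos hl]
      exact atom_minimal hb hl
  have hinj : Set.InjOn f {l : Fin m | GapIdx n m b l} := by
    intro l hl l' hl' heq
    simp only [Set.mem_setOf_eq] at hl hl'
    simp only [hf, dif_pos hl, dif_pos hl', Subtype.mk.injEq] at heq
    by_contra hne
    have h1 := congrFun heq l
    rw [Atm_self, Atm_of_ne b hne] at h1
    omega
  have hcard : {c : ↥(GammaF n m b) | Minimal (· ∈ JP n m b) c}.ncard =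
      {l : Fin m | GapIdx n m b l}.ncard := by
    rw [himg, Set.ncard_image_of_injOn hinj]
  refine ⟨hcard, ?_⟩
  rw [← hcard, Set.ncard_eq_one]
  constructor
  · rintro ⟨c, hc, hu⟩
    exact ⟨c, Set.eq_singleton_iff_unique_mem.2 ⟨hc, fun y hy => hu y hy⟩⟩
  · rintro ⟨a, ha⟩
    have := Set.eq_singleton_iff_unique_mem.1 ha
    exact ⟨a, this.1, fun y hy => this.2 y hy⟩
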